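/- Let R be a graded Gorenstein K-algebra, and suppose M and N are linked by C, and N and M' are linked by C'. Put s = r(C) - r(C') + a(C) - a(C'). Then for all integers j: h_{M'}(j) = h_M(j+s) + h_{C'}(j) - h_C(j+s). -/

import Mathlib

open CategoryTheory Opposite DirectSum

noncomputable section

/-- The Ext modules `Ext^n_R(M, N)`. -/
noncomputable def RExt (R : Type) [CommRing R] (M N : ModuleCat R) (n : ℕ) : ModuleCat R :=
  ((Ext R (ModuleCat R) n).obj (op M)).obj N

/-- The (Krull) dimension of a module. -/
noncomputable def mDim (R : Type) [CommRing R] (M : Type) [AddCommGroup M] [Module R M] :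
    WithBot (WithTop ℕ) :=
  ringKrullDim (R ⧸ Module.annihilator R M)

/-- A graded Gorenstein algebra: Noetherian of finite self-injective dimension. -/
def IsGorensteinGradedRing (R : Type) [CommRing R] : Prop :=
  IsNoetherianRing R ∧
    ∃ n : ℕ, ∀ (N : ModuleCat R) (i : ℕ), n < i →
      Subsingleton (RExt R N (ModuleCat.of R R) i)

/-- The Hilbert function of a graded vector space. -/
noncomputable def hilb (K : Type) [Field K] {M : Type} [AddCommGroup M] [Module K M]
    (ℳ : ℤ → Submodule K M) (j : ℤ) : ℕ :=
  Module.finrank K (ℳ j)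

/-- The irrelevant maximal ideal of a graded algebra. -/
def irrelIdeal (K R : Type) [Field K] [CommRing R] [Algebra K R]
    (𝒜 : ℤ → Submodule K R) : Ideal R :=
  Ideal.span (⋃ i : {i : ℤ // 0 < i}, ((𝒜 i.1 : Set R)))

/-- A short exact sequence `0 → A → B → C → 0`. -/
def IsSES (R : Type) [CommRing R] {A B C : Type} [AddCommGroup A] [Module R A]
    [AddCommGroup B] [Module R B] [AddCommGroup C] [Module R C]
    (f : A →ₗ[R] B) (g : B →ₗ[R] C) : Prop :=
  Function.Injective f ∧ Function.Surjective g ∧ Function.Exact f g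

end

section helpers
variable {K R : Type} [Field K] [CommRing R] [Algebra K R]

lemma decompose_map_aux
    {A B : Type} [AddCommGroup A] [Module R A] [Module K A] [IsScalarTower K R A]
    [AddCommGroup B] [Module R B] [Module K B] [IsScalarTower K R B]
    (𝒜 : ℤ → Submodule K A) [DirectSum.Decomposition 𝒜]
    (ℬ : ℤ → Submodule K B) [DirectSum.Decomposition ℬ]
    (φ : A →ₗ[R] B) (d : ℤ)
    (hφ : ∀ i, ∀ x ∈ 𝒜 i, φ x ∈ ℬ (i + d)) (a : A) (i : ℤ) :
    (DirectSum.decompose ℬ (φ a) (i + d) : B) = φ (DirectSum.decompose 𝒜 a i) := by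
  induction a using DirectSum.Decomposition.inductionOn 𝒜 with
  | zero => simp
  | @homogeneous j m =>
    by_cases h : i = j
    · subst h
      rw [DirectSum.decompose_of_mem_same ℬ (hφ i m m.2),
        DirectSum.decompose_of_mem_same 𝒜 m.2]
    · rw [DirectSum.decompose_of_mem_ne ℬ (hφ j m m.2) (by omega),
        DirectSum.decompose_of_mem_ne 𝒜 m.2 (Ne.symm h)]
      simp
  | add x y hx hy =>
    rw [map_add φ, DirectSum.decompose_add, DirectSum.decompose_add, DirectSum.add_apply,
      DirectSum.add_apply, Submodule.coe_add, Submodule.coe_add, hx, hy, map_add]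

lemma hilb_additive_of_ses
    {A B Cc : Type} [AddCommGroup A] [Module R A] [Module K A] [IsScalarTower K R A]
    [AddCommGroup B] [Module R B] [Module K B] [IsScalarTower K R B]
    [AddCommGroup Cc] [Module R Cc] [Module K Cc] [IsScalarTower K R Cc]
    (𝒜 : ℤ → Submodule K A) [DirectSum.Decomposition 𝒜]
    (ℬ : ℤ → Submodule K B) [DirectSum.Decomposition ℬ]
    (𝒞 : ℤ → Submodule K Cc) [DirectSum.Decomposition 𝒞]
    [∀ j : ℤ, Module.Finite K (𝒜 j)] [∀ j : ℤ, Module.Finite K (ℬ j)]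
    [∀ j : ℤ, Module.Finite K (𝒞 j)]
    (f : A →ₗ[R] B) (g : B →ₗ[R] Cc) (hses : IsSES R f g)
    (d : ℤ) (hf : ∀ i, ∀ x ∈ 𝒜 i, f x ∈ ℬ (i + d))
    (hg : ∀ i, ∀ x ∈ ℬ i, g x ∈ 𝒞 i) (i : ℤ) :
    hilb K ℬ i = hilb K 𝒞 i + hilb K 𝒜 (i - d) := by
  obtain ⟨hinj, hsurj, hexact⟩ := hses
  have hcf : ∀ a (k : ℤ), (DirectSum.decompose ℬ (f a) (k + d) : B)
      = f (DirectSum.decompose 𝒜 a k) := decompose_map_aux 𝒜 ℬ f d hf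
  have hcg : ∀ b (k : ℤ), (DirectSum.decompose 𝒞 (g b) k : Cc)
      = g (DirectSum.decompose ℬ b k) := by
    intro b k
    have := decompose_map_aux ℬ 𝒞 g 0 (by simpa using hg) b k
    rwa [add_zero] at this
  -- the restricted maps
  have hmemf : ∀ x : 𝒜 (i - d), f x ∈ ℬ i := by
    intro x
    have := hf (i - d) x x.2
    rwa [sub_add_cancel] at this
  set fi : 𝒜 (i - d) →ₗ[K] ℬ i :=
    ((f.restrictScalars K).comp (𝒜 (i - d)).subtype).codRestrict (ℬ i) hmemf with hfi
  set gi : ℬ i →ₗ[K] 𝒞 i :=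
    ((g.restrictScalars K).comp (ℬ i).subtype).codRestrict (𝒞 i)
      (fun x => hg i x x.2) with hgi
  have hfi_inj : Function.Injective fi := by
    intro x y hxy
    apply Subtype.ext
    apply hinj
    exact congrArg Subtype.val hxy
  have hgi_surj : Function.Surjective gi := by
    rintro ⟨m, hm⟩
    obtain ⟨b, hb⟩ := hsurj m
    refine ⟨⟨(DirectSum.decompose ℬ b i : B), Submodule.coe_mem _⟩, ?_⟩
    apply Subtype.ext
    show g ((DirectSum.decompose ℬ b i : B)) = m
    rw [← hcg b i, hb, DirectSum.decompose_of_mem_same 𝒞 hm]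
  have hrange : LinearMap.range fi = LinearMap.ker gi := by
    ext ⟨x, hx⟩
    constructor
    · rintro ⟨a, ha⟩
      have h0 : gi (fi a) = 0 := by
        apply Subtype.ext
        show g (f (a : A)) = 0
        exact (hexact (f (a : A))).mpr ⟨a, rfl⟩
      rw [LinearMap.mem_ker, ← ha]
      exact h0
    · intro hker
      have hgx : g x = 0 := congrArg Subtype.val hker
      obtain ⟨a, ha⟩ := (hexact x).mp hgx
      refine ⟨⟨(DirectSum.decompose 𝒜 a (i - d) : A), Submodule.coe_mem _⟩, ?_⟩
      apply Subtype.ext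
      show f ((DirectSum.decompose 𝒜 a (i - d) : A)) = x
      rw [← hcf a (i - d), sub_add_cancel, ha, DirectSum.decompose_of_mem_same ℬ hx]
  have h1 : Module.finrank K (LinearMap.range gi) + Module.finrank K (LinearMap.ker gi)
      = Module.finrank K (ℬ i) := LinearMap.finrank_range_add_finrank_ker gi
  have h2 : LinearMap.range gi = ⊤ := LinearMap.range_eq_top.mpr hgi_surj
  have h3 : Module.finrank K (LinearMap.range fi) = Module.finrank K (𝒜 (i - d)) :=
    LinearMap.finrank_range_of_inj hfi_inj
  rw [hrange] at h3
  rw [h2, finrank_top, h3] at h1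
  unfold hilb
  omega

end helpers

/-- Suppose the graded modules `M, N` are linked by `C` and `N, M'` are
linked by `C'`.  Put `s = r(C) - r(C') + a(C) - a(C')`.  Then for all integers `j`:
`h_{M'}(j) = h_M(j + s) + h_{C'}(j) - h_C(j + s)`.  The two linkages are given by the
graded exact sequences `0 → K_N(1 - r(C) - a(C)) → C → M → 0` and
`0 → K_N(1 - r(C') - a(C')) → C' → M' → 0`. -/
theorem hilbert_function_under_even_liaison
    (K R : Type) [Field K] [CommRing R] [Algebra K R]
    (𝒜 : ℤ → Submodule K R) [GradedAlgebra 𝒜] (hGor : IsGorensteinGradedRing R)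
    (M : Type) [AddCommGroup M] [Module R M] [Module K M] [IsScalarTower K R M]
    (ℳ : ℤ → Submodule K M) [SetLike.GradedSMul 𝒜 ℳ] [DirectSum.Decomposition ℳ]
    [∀ j : ℤ, Module.Finite K (ℳ j)] [Module.Finite R M]
    (M' : Type) [AddCommGroup M'] [Module R M'] [Module K M'] [IsScalarTower K R M']
    (ℳ' : ℤ → Submodule K M') [SetLike.GradedSMul 𝒜 ℳ'] [DirectSum.Decomposition ℳ']
    [∀ j : ℤ, Module.Finite K (ℳ' j)] [Module.Finite R M']
    (C : Type) [AddCommGroup C] [Module R C] [Module K C] [IsScalarTower K R C]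
    (𝒞 : ℤ → Submodule K C) [SetLike.GradedSMul 𝒜 𝒞] [DirectSum.Decomposition 𝒞]
    [∀ j : ℤ, Module.Finite K (𝒞 j)] [Module.Finite R C]
    (C' : Type) [AddCommGroup C'] [Module R C'] [Module K C'] [IsScalarTower K R C']
    (𝒞' : ℤ → Submodule K C') [SetLike.GradedSMul 𝒜 𝒞'] [DirectSum.Decomposition 𝒞']
    [∀ j : ℤ, Module.Finite K (𝒞' j)] [Module.Finite R C']
    -- the canonical module K_N of the middle module N
    (KN : Type) [AddCommGroup KN] [Module R KN] [Module K KN] [IsScalarTower K R KN]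
    (𝒦 : ℤ → Submodule K KN) [SetLike.GradedSMul 𝒜 𝒦] [DirectSum.Decomposition 𝒦]
    [∀ j : ℤ, Module.Finite K (𝒦 j)]
    -- indices of regularity and initial degrees of C and C'
    (pC pC' : Polynomial ℚ)
    (hpC : ∃ N₀ : ℤ, ∀ j : ℤ, N₀ ≤ j → (hilb K 𝒞 j : ℚ) = pC.eval (j : ℚ))
    (hpC' : ∃ N₀ : ℤ, ∀ j : ℤ, N₀ ≤ j → (hilb K 𝒞' j : ℚ) = pC'.eval (j : ℚ))
    (rC aC rC' aC' : ℤ)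
    (hrC : IsLeast {i : ℤ | ∀ j : ℤ, i ≤ j → (hilb K 𝒞 j : ℚ) = pC.eval (j : ℚ)} rC)
    (haC : IsLeast {i : ℤ | 𝒞 i ≠ ⊥} aC)
    (hrC' : IsLeast {i : ℤ | ∀ j : ℤ, i ≤ j → (hilb K 𝒞' j : ℚ) = pC'.eval (j : ℚ)} rC')
    (haC' : IsLeast {i : ℤ | 𝒞' i ≠ ⊥} aC')
    -- the graded exact sequence 0 → K_N(1 - r(C) - a(C)) → C → M → 0
    (f : KN →ₗ[R] C) (g : C →ₗ[R] M) (hses : IsSES R f g)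
    (hf : ∀ (i : ℤ), ∀ x ∈ 𝒦 i, f x ∈ 𝒞 (i + (rC + aC - 1)))
    (hg : ∀ (i : ℤ), ∀ x ∈ 𝒞 i, g x ∈ ℳ i)
    -- the graded exact sequence 0 → K_N(1 - r(C') - a(C')) → C' → M' → 0
    (f' : KN →ₗ[R] C') (g' : C' →ₗ[R] M') (hses' : IsSES R f' g')
    (hf' : ∀ (i : ℤ), ∀ x ∈ 𝒦 i, f' x ∈ 𝒞' (i + (rC' + aC' - 1)))
    (hg' : ∀ (i : ℤ), ∀ x ∈ 𝒞' i, g' x ∈ ℳ' i) :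
    ∀ j : ℤ, (hilb K ℳ' j : ℤ) =
      (hilb K ℳ (j + (rC - rC' + aC - aC')) : ℤ) + (hilb K 𝒞' j : ℤ) -
        (hilb K 𝒞 (j + (rC - rC' + aC - aC')) : ℤ) := by
  intro j
  have hs : j + (rC - rC' + aC - aC') - (rC + aC - 1) = j - (rC' + aC' - 1) := by omega
  have e1 := hilb_additive_of_ses 𝒦 𝒞 ℳ f g hses (rC + aC - 1) hf hg
    (j + (rC - rC' + aC - aC'))
  have e2 := hilb_additive_of_ses 𝒦 𝒞' ℳ' f' g' hses' (rC' + aC' - 1) hf' hg' j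
  rw [hs] at e1
  omega
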